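/- Let Q be a connected Laplacian matrix on V = {0,…,n}. For every permutation σ of V and every integer k with 0 ≤ k ≤ n − 2, there exists a linear functional f on ℝ^{n+1} whose maximum over the Delaunay polytope H_{Del_G}(O) is attained exactly at the points of the segment with endpoints u^σ_k and u^σ_{k+1}; that is, each segment [u^σ_k, u^σ_{k+1}] (0 ≤ k ≤ n−2) is an exposed edge of H_{Del_G}(O). -/

import Mathlib

open Finset

/-- A Laplacian matrix of a multigraph on vertex set `Fin (n+1)`:
symmetric, nonpositive off-diagonal entries, all row sums zero. -/
def IsLaplacian (n : ℕ) (Q : Matrix (Fin (n+1)) (Fin (n+1)) ℤ) : Prop :=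
  (∀ i j, Q i j = Q j i) ∧ (∀ i j, i ≠ j → Q i j ≤ 0) ∧ (∀ i, ∑ j, Q i j = 0)

/-- A connected Laplacian matrix: the graph with an edge `{i,j}` whenever
`b_{ij} = -Q i j > 0` is connected. -/
def IsConnectedLaplacian (n : ℕ) (Q : Matrix (Fin (n+1)) (Fin (n+1)) ℤ) : Prop :=
  IsLaplacian n Q ∧ (SimpleGraph.fromRel (fun i j => Q i j ≠ 0)).Connected

/-- The Laplacian lattice: the subgroup of `ℤ^{n+1}` generated by the rows of `Q`. -/
noncomputable def lapLattice (n : ℕ) (Q : Matrix (Fin (n+1)) (Fin (n+1)) ℤ) :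
    AddSubgroup (Fin (n+1) → ℤ) :=
  AddSubgroup.closure (Set.range fun i => Q i)

/-- The hyperplane `H_0 = {x ∈ ℝ^{n+1} : ∑ x i = 0}`. -/
def H0 (n : ℕ) : Set (Fin (n+1) → ℝ) := {x | ∑ i, x i = 0}

/-- The simplicial distance function on `H_0`: `d_△(p,q) = max_i (p i - q i)`. -/
noncomputable def simpDist (n : ℕ) (p q : Fin (n+1) → ℝ) : ℝ :=
  Finset.univ.sup' Finset.univ_nonempty fun i => p i - q i

/-- Coercion of an integer vector to a real vector. -/
noncomputable def intVec (n : ℕ) (q : Fin (n+1) → ℤ) : Fin (n+1) → ℝ := fun i => (q i : ℝ)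

/-- The root lattice `A_n = {x ∈ ℤ^{n+1} : ∑ x i = 0}`. -/
def rootLattice (n : ℕ) : AddSubgroup (Fin (n+1) → ℤ) where
  carrier := {x | ∑ i, x i = 0}
  add_mem' := by
    intro a b ha hb
    simp only [Set.mem_setOf_eq, Pi.add_apply, Finset.sum_add_distrib] at *
    omega
  zero_mem' := by simp
  neg_mem' := by
    intro a ha
    simp only [Set.mem_setOf_eq, Pi.neg_apply, Finset.sum_neg_distrib] at *
    omega

/-- The `i`-th row of `Q` as a real vector. -/
noncomputable def rowVec (n : ℕ) (Q : Matrix (Fin (n+1)) (Fin (n+1)) ℤ) (i : Fin (n+1)) :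
    Fin (n+1) → ℝ := fun j => (Q i j : ℝ)

/-- `u^σ_k = b_{σ(0)} + ⋯ + b_{σ(k)}`. -/
noncomputable def uPerm (n : ℕ) (Q : Matrix (Fin (n+1)) (Fin (n+1)) ℤ)
    (σ : Equiv.Perm (Fin (n+1))) (k : Fin (n+1)) : Fin (n+1) → ℝ :=
  ∑ j ∈ Finset.Iic k, rowVec n Q (σ j)

/-- The Delaunay polytope of the origin: the union over all permutations `σ`
of the simplices `△_σ = conv{u^σ_0, …, u^σ_n}`. -/
noncomputable def HDel (n : ℕ) (Q : Matrix (Fin (n+1)) (Fin (n+1)) ℤ) :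
    Set (Fin (n+1) → ℝ) :=
  ⋃ σ : Equiv.Perm (Fin (n+1)), convexHull ℝ (Set.range (uPerm n Q σ))

/-- `u_S = ∑_{i ∈ S} b_i`, as a real vector. -/
noncomputable def uCut (n : ℕ) (Q : Matrix (Fin (n+1)) (Fin (n+1)) ℤ)
    (S : Finset (Fin (n+1))) : Fin (n+1) → ℝ := ∑ i ∈ S, rowVec n Q i


lemma kernel_const {n : ℕ} {Q : Matrix (Fin (n+1)) (Fin (n+1)) ℤ}
    (hsym : ∀ i j, Q i j = Q j i)
    (hoff : ∀ i j, i ≠ j → Q i j ≤ 0)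
    (hrow : ∀ i, ∑ j, Q i j = 0)
    (hconn : (SimpleGraph.fromRel (fun i j => Q i j ≠ 0)).Connected)
    (w : Fin (n+1) → ℝ) (hw : ∀ i, ∑ j, (Q i j : ℝ) * w j = 0) :
    ∀ i j, w i = w j := by
  obtain ⟨i0, -, hmax⟩ := Finset.exists_max_image (Finset.univ : Finset (Fin (n+1))) w
    ⟨0, Finset.mem_univ 0⟩
  have step : ∀ i, w i = w i0 → ∀ j,
      (SimpleGraph.fromRel (fun i j => Q i j ≠ 0)).Adj i j → w j = w i0 := by
    intro i hi j hadj
    have hrowR : ∑ t, (Q i t : ℝ) = 0 := by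
      rw [← Int.cast_sum, hrow i, Int.cast_zero]
    have h0 : ∑ t, (Q i t : ℝ) * (w t - w i) = 0 := by
      have : ∑ t, (Q i t : ℝ) * (w t - w i)
          = ∑ t, (Q i t : ℝ) * w t - (∑ t, (Q i t : ℝ)) * w i := by
        rw [Finset.sum_mul, ← Finset.sum_sub_distrib]
        congr 1; ext t; ring
      rw [this, hw i, hrowR, zero_mul, sub_zero]
    have hnn : ∀ t ∈ Finset.univ, 0 ≤ (Q i t : ℝ) * (w t - w i) := by
      intro t _
      rcases eq_or_ne t i with rfl | ht
      · simp
      · have h1 : (Q i t : ℝ) ≤ 0 := by exact_mod_cast hoff i t (Ne.symm ht)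
        have h2 : w t - w i ≤ 0 := by
          have := hmax t (Finset.mem_univ t)
          rw [hi]; linarith
        nlinarith
    have hz := (Finset.sum_eq_zero_iff_of_nonneg hnn).mp h0
    rw [SimpleGraph.fromRel_adj] at hadj
    have hQij : Q i j ≠ 0 := by
      rcases hadj.2 with h | h
      · exact h
      · rw [hsym]; exact h
    have := hz j (Finset.mem_univ j)
    have hcast : (Q i j : ℝ) ≠ 0 := Int.cast_ne_zero.mpr hQij
    have : w j - w i = 0 := by
      rcases mul_eq_zero.mp this with h | h
      · exact absurd h hcast
      · exact h
    rw [← hi]; linarith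
  have key : ∀ a b, (SimpleGraph.fromRel (fun i j => Q i j ≠ 0)).Walk a b →
      w a = w i0 → w b = w i0 := by
    intro a b p
    induction p with
    | nil => exact id
    | cons hadj p ih => intro ha; exact ih (step _ ha _ hadj)
  have hall : ∀ j, w j = w i0 := by
    intro j
    obtain ⟨p⟩ := hconn.preconnected i0 j
    exact key _ _ p rfl
  intro i j; rw [hall i, hall j]


lemma exists_preimage {n : ℕ} {Q : Matrix (Fin (n+1)) (Fin (n+1)) ℤ}
    (hsym : ∀ i j, Q i j = Q j i)
    (hoff : ∀ i j, i ≠ j → Q i j ≤ 0)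
    (hrow : ∀ i, ∑ j, Q i j = 0)
    (hconn : (SimpleGraph.fromRel (fun i j => Q i j ≠ 0)).Connected)
    (c : Fin (n+1) → ℝ) (hc : ∑ i, c i = 0) :
    ∃ w : Fin (n+1) → ℝ, ∀ i, ∑ j, (Q i j : ℝ) * w j = c i := by
  classical
  set Qr : Matrix (Fin (n+1)) (Fin (n+1)) ℝ := fun i j => (Q i j : ℝ) with hQr
  set L : (Fin (n+1) → ℝ) →ₗ[ℝ] (Fin (n+1) → ℝ) := Qr.mulVecLin with hL
  set g : (Fin (n+1) → ℝ) →ₗ[ℝ] ℝ :=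
    ∑ i, (LinearMap.proj i : ((Fin (n+1)) → ℝ) →ₗ[ℝ] ℝ) with hg
  have hgapp : ∀ x : Fin (n+1) → ℝ, g x = ∑ i, x i := by
    intro x; simp [hg]
  have hLapp : ∀ (v : Fin (n+1) → ℝ) (i), L v i = ∑ j, (Q i j : ℝ) * v j := by
    intro v i
    simp [hL, Matrix.mulVecLin_apply, Matrix.mulVec, dotProduct, hQr]
    rfl
  have hrowR : ∀ i, ∑ j, (Q i j : ℝ) = 0 := by
    intro i; rw [← Int.cast_sum, hrow i, Int.cast_zero]
  -- kernel of L
  have hker : LinearMap.ker L = Submodule.span ℝ {(fun _ => 1 : Fin (n+1) → ℝ)} := by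
    apply le_antisymm
    · intro w hw
      rw [LinearMap.mem_ker] at hw
      have hw' : ∀ i, ∑ j, (Q i j : ℝ) * w j = 0 := by
        intro i; rw [← hLapp w i, hw]; rfl
      have hconst := kernel_const hsym hoff hrow hconn w hw'
      have : w = w 0 • (fun _ => 1 : Fin (n+1) → ℝ) := by
        funext i; simp [hconst i 0]
      rw [this]
      exact Submodule.smul_mem _ _ (Submodule.mem_span_singleton_self _)
    · rw [Submodule.span_le, Set.singleton_subset_iff]
      rw [SetLike.mem_coe, LinearMap.mem_ker]
      funext i
      simp only [hLapp]
      simpa using hrowR i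
  have hone : (fun _ => 1 : Fin (n+1) → ℝ) ≠ 0 := by
    intro h
    have := congrFun h 0
    norm_num at this
  have hkerrank : Module.finrank ℝ (LinearMap.ker L) = 1 := by
    rw [hker]
    exact finrank_span_singleton hone
  have hrangele : LinearMap.range L ≤ LinearMap.ker g := by
    rintro x ⟨v, rfl⟩
    rw [LinearMap.mem_ker, hgapp]
    have : ∑ i, L v i = ∑ i, ∑ j, (Q i j : ℝ) * v j := by
      simp only [hLapp]
    rw [this, Finset.sum_comm]
    have : ∀ j, ∑ i, (Q i j : ℝ) * v j = 0 := by
      intro j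
      rw [← Finset.sum_mul]
      have : ∑ i, (Q i j : ℝ) = 0 := by
        have : ∑ i, (Q i j : ℝ) = ∑ i, (Q j i : ℝ) := by
          congr 1; ext i; rw [hsym]
        rw [this, hrowR j]
      rw [this, zero_mul]
    exact Finset.sum_eq_zero fun j _ => this j
  have hgsurj : LinearMap.range g = ⊤ := by
    rw [LinearMap.range_eq_top]
    intro r
    refine ⟨fun _ => r / (n+1), ?_⟩
    rw [hgapp]
    rw [Finset.sum_const, Finset.card_univ, Fintype.card_fin]
    rw [nsmul_eq_mul]; push_cast
    field_simp
  have hdim : Module.finrank ℝ (Fin (n+1) → ℝ) = n + 1 := by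
    simp
  have hkerg : Module.finrank ℝ (LinearMap.ker g) = n := by
    have := LinearMap.finrank_range_add_finrank_ker g
    rw [hgsurj, hdim] at this
    have h1 : Module.finrank ℝ (⊤ : Submodule ℝ ℝ) = 1 := by
      rw [finrank_top]; exact Module.finrank_self ℝ
    omega
  have hrangeL : Module.finrank ℝ (LinearMap.range L) = n := by
    have := LinearMap.finrank_range_add_finrank_ker L
    rw [hkerrank, hdim] at this
    omega
  have heq : LinearMap.range L = LinearMap.ker g :=
    Submodule.eq_of_le_of_finrank_le hrangele (by rw [hkerg, hrangeL])
  have hcmem : c ∈ LinearMap.ker g := by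
    rw [LinearMap.mem_ker, hgapp]; exact hc
  rw [← heq] at hcmem
  obtain ⟨w, hwc⟩ := hcmem
  refine ⟨w, fun i => ?_⟩
  rw [← hLapp w i, hwc]


lemma csum_le {α : Type*} [DecidableEq α] (A S : Finset α) (m : α) (hm : m ∉ A)
    {d a : ℝ} (hd : 0 < d) (ha : 0 < a) :
    ∑ s ∈ S, (if s ∈ A then d else if s = m then (0:ℝ) else -a) ≤ d * A.card := by
  classical
  rw [← Finset.sum_filter_add_sum_filter_not S (· ∈ A)]
  have h1 : ∑ s ∈ S.filter (· ∈ A), (if s ∈ A then d else if s = m then (0:ℝ) else -a)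
      = d * (S.filter (· ∈ A)).card := by
    rw [Finset.sum_congr rfl (fun s hs => ?_), Finset.sum_const, nsmul_eq_mul, mul_comm]
    rw [if_pos (Finset.mem_filter.mp hs).2]
  have h2 : ∑ s ∈ S.filter (· ∉ A), (if s ∈ A then d else if s = m then (0:ℝ) else -a) ≤ 0 := by
    apply Finset.sum_nonpos
    intro s hs
    rw [if_neg (Finset.mem_filter.mp hs).2]
    split <;> linarith
  have h3 : (S.filter (· ∈ A)).card ≤ A.card := by
    apply Finset.card_le_card
    intro s hs; exact (Finset.mem_filter.mp hs).2
  have h4 : (((S.filter (· ∈ A)).card : ℝ)) ≤ (A.card : ℝ) := by exact_mod_cast h3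
  nlinarith
lemma csum_eq_iff {α : Type*} [DecidableEq α] (A S : Finset α) (m : α) (hm : m ∉ A)
    {d a : ℝ} (hd : 0 < d) (ha : 0 < a) :
    ∑ s ∈ S, (if s ∈ A then d else if s = m then (0:ℝ) else -a) = d * A.card
      ↔ (S = A ∨ S = insert m A) := by
  classical
  constructor
  · intro heq
    rw [← Finset.sum_filter_add_sum_filter_not S (· ∈ A)] at heq
    have h1 : ∑ s ∈ S.filter (· ∈ A), (if s ∈ A then d else if s = m then (0:ℝ) else -a)
        = d * (S.filter (· ∈ A)).card := by
      rw [Finset.sum_congr rfl (fun s hs => ?_), Finset.sum_const, nsmul_eq_mul, mul_comm]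
      rw [if_pos (Finset.mem_filter.mp hs).2]
    have h2 : ∀ s ∈ S.filter (· ∉ A), (if s ∈ A then d else if s = m then (0:ℝ) else -a) ≤ 0 := by
      intro s hs
      rw [if_neg (Finset.mem_filter.mp hs).2]
      split <;> linarith
    have h3 : (S.filter (· ∈ A)).card ≤ A.card := by
      apply Finset.card_le_card
      intro s hs; exact (Finset.mem_filter.mp hs).2
    have h2' : ∑ s ∈ S.filter (· ∉ A), (if s ∈ A then d else if s = m then (0:ℝ) else -a) ≤ 0 :=
      Finset.sum_nonpos h2
    have h4 : (((S.filter (· ∈ A)).card : ℝ)) ≤ (A.card : ℝ) := by exact_mod_cast h3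
    -- both inequalities must be tight
    have hcardeq : ((S.filter (· ∈ A)).card : ℝ) = (A.card : ℝ) := by nlinarith
    have hzero : ∑ s ∈ S.filter (· ∉ A), (if s ∈ A then d else if s = m then (0:ℝ) else -a) = 0 := by
      rw [h1, hcardeq] at heq; linarith
    have hAsub : A ⊆ S := by
      have hcard : A.card ≤ (S.filter (· ∈ A)).card := by exact_mod_cast hcardeq.ge
      have : S.filter (· ∈ A) = A :=
        Finset.eq_of_subset_of_card_le (fun s hs => (Finset.mem_filter.mp hs).2) hcard
      intro x hx
      rw [← this] at hx
      exact (Finset.mem_filter.mp hx).1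
    have hSsub : S ⊆ insert m A := by
      intro s hs
      by_cases hsA : s ∈ A
      · exact Finset.mem_insert_of_mem hsA
      · have hs' : s ∈ S.filter (· ∉ A) := Finset.mem_filter.mpr ⟨hs, hsA⟩
        have := (Finset.sum_eq_zero_iff_of_nonpos h2).mp hzero s hs'
        rw [if_neg hsA] at this
        by_cases hsm : s = m
        · rw [hsm]; exact Finset.mem_insert_self m A
        · rw [if_neg hsm] at this; linarith
    by_cases hmS : m ∈ S
    · right
      apply Finset.Subset.antisymm hSsub
      intro x hx
      rcases Finset.mem_insert.mp hx with rfl | hx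
      · exact hmS
      · exact hAsub hx
    · left
      apply Finset.Subset.antisymm _ hAsub
      intro s hs
      rcases Finset.mem_insert.mp (hSsub hs) with rfl | h
      · exact absurd hs hmS
      · exact h
  · rintro (rfl | rfl)
    · rw [Finset.sum_congr rfl (fun s hs => if_pos hs), Finset.sum_const, nsmul_eq_mul, mul_comm]
    · rw [Finset.sum_insert hm, Finset.sum_congr rfl (fun s hs => if_pos hs),
        Finset.sum_const, nsmul_eq_mul, mul_comm, if_neg hm, if_pos rfl, zero_add]

lemma face_of_max {E : Type*} [AddCommGroup E] [Module ℝ E] [DecidableEq E]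
    (s : Finset E) (f : E →ₗ[ℝ] ℝ) (M : ℝ)
    (hle : ∀ y ∈ s, f y ≤ M) {x : E} (hx : x ∈ convexHull ℝ (s : Set E)) (hfx : M ≤ f x) :
    x ∈ convexHull ℝ ((s.filter (fun y => f y = M)) : Set E) := by
  classical
  rw [Finset.convexHull_eq] at hx
  obtain ⟨w, hw0, hw1, hcm⟩ := hx
  rw [Finset.centerMass_eq_of_sum_1 _ _ hw1] at hcm
  simp only [id] at hcm
  have hfxle : f x = ∑ y ∈ s, w y * f y := by
    rw [← hcm, map_sum]
    simp [LinearMap.map_smul, smul_eq_mul]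
  have hkey : ∀ y ∈ s, f y ≠ M → w y = 0 := by
    intro y hy hfy
    by_contra hwy
    have hwy' : 0 < w y := lt_of_le_of_ne (hw0 y hy) (Ne.symm hwy)
    have hterm : ∀ z ∈ s, 0 ≤ w z * (M - f z) := by
      intro z hz
      exact mul_nonneg (hw0 z hz) (by linarith [hle z hz])
    have hsum : ∑ z ∈ s, w z * (M - f z) ≤ 0 := by
      have : ∑ z ∈ s, w z * (M - f z) = M * (∑ z ∈ s, w z) - ∑ z ∈ s, w z * f z := by
        rw [Finset.mul_sum, ← Finset.sum_sub_distrib]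
        congr 1; ext z; ring
      rw [this, hw1, mul_one, ← hfxle]
      linarith
    have hz := (Finset.sum_eq_zero_iff_of_nonneg hterm).mp
      (le_antisymm hsum (Finset.sum_nonneg hterm)) y hy
    have : M - f y ≠ 0 := fun h => hfy (by linarith)
    rcases mul_eq_zero.mp hz with h | h
    · exact hwy h
    · exact this h
  set t := s.filter (fun y => f y = M) with ht
  have hsum1 : ∑ y ∈ t, w y = 1 := by
    rw [← hw1]
    apply Finset.sum_subset (Finset.filter_subset _ _)
    intro y hy hyt
    apply hkey y hy
    intro h
    exact hyt (Finset.mem_filter.mpr ⟨hy, h⟩)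
  have hxeq : x = ∑ y ∈ t, w y • y := by
    rw [← hcm]
    symm
    apply Finset.sum_subset (Finset.filter_subset _ _)
    intro y hy hyt
    rw [hkey y hy (fun h => hyt (Finset.mem_filter.mpr ⟨hy, h⟩)), zero_smul]
  have := Finset.centerMass_mem_convexHull t
    (fun y hy => hw0 y (Finset.filter_subset _ _ hy))
    (by rw [hsum1]; norm_num)
    (fun y hy => Finset.mem_coe.mpr hy)
  rwa [Finset.centerMass_eq_of_sum_1 _ _ hsum1, ← hxeq] at this

/-- for every permutation `σ` and every `0 ≤ k ≤ n - 2`, the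
segment `[u^σ_k, u^σ_{k+1}]` is an exposed edge of the Delaunay polytope: some
linear functional attains its maximum over `H_{Del_G}(O)` exactly there. -/
theorem segment_is_exposed_edge (n : ℕ) (hn : 1 ≤ n)
    (Q : Matrix (Fin (n+1)) (Fin (n+1)) ℤ) (hQ : IsConnectedLaplacian n Q)
    (σ : Equiv.Perm (Fin (n+1))) (k : ℕ) (hk : k + 2 ≤ n) :
    ∃ f : (Fin (n+1) → ℝ) →ₗ[ℝ] ℝ,
      {x | x ∈ HDel n Q ∧ ∀ y ∈ HDel n Q, f y ≤ f x} =
        segment ℝ (uPerm n Q σ ⟨k, by omega⟩) (uPerm n Q σ ⟨k + 1, by omega⟩) := by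
  classical
  obtain ⟨⟨hsym, hoff, hrow⟩, hconn⟩ := hQ
  set kk : Fin (n+1) := ⟨k, by omega⟩ with hkk
  set kk1 : Fin (n+1) := ⟨k + 1, by omega⟩ with hkk1
  set A : Finset (Fin (n+1)) := (Finset.Iic kk).image σ with hA
  set m : Fin (n+1) := σ kk1 with hm
  have hmA : m ∉ A := by
    intro hmem
    rw [hA, Finset.mem_image] at hmem
    obtain ⟨j, hj, hje⟩ := hmem
    have := σ.injective hje
    subst this
    rw [Finset.mem_Iic, Fin.le_def] at hj
    simp [hkk, hkk1] at hj
  have hAcard : A.card = k + 1 := by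
    rw [hA, Finset.card_image_of_injective _ σ.injective, Fin.card_Iic]
  set d : ℝ := (n : ℝ) - k - 1 with hd'
  set a : ℝ := (k : ℝ) + 1 with ha'
  have hd : 0 < d := by
    have : (k : ℝ) + 2 ≤ (n : ℝ) := by exact_mod_cast hk
    rw [hd']; linarith
  have ha : 0 < a := by rw [ha']; positivity
  set c : Fin (n+1) → ℝ := fun s => if s ∈ A then d else if s = m then 0 else -a with hc'
  -- the sum of c is zero
  have hc : ∑ i, c i = 0 := by
    rw [← Finset.sum_filter_add_sum_filter_not Finset.univ (· ∈ A) c]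
    have hfA : Finset.univ.filter (· ∈ A) = A := by
      ext s; simp
    have h1 : ∑ s ∈ Finset.univ.filter (· ∈ A), c s = d * (k+1 : ℕ) := by
      rw [hfA, Finset.sum_congr rfl (fun s hs => if_pos hs), Finset.sum_const,
        nsmul_eq_mul, mul_comm, hAcard]
    have hTm : m ∈ Finset.univ.filter (· ∉ A) := by simp [hmA]
    have hcm : c m = 0 := by rw [hc']; simp [hmA]
    have h2 : ∑ s ∈ Finset.univ.filter (· ∉ A), c s
        = ∑ s ∈ (Finset.univ.filter (· ∉ A)).erase m, c s := (Finset.sum_erase _ hcm).symm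
    have h3 : ∑ s ∈ (Finset.univ.filter (· ∉ A)).erase m, c s
        = -a * (((Finset.univ.filter (· ∉ A)).erase m).card : ℝ) := by
      rw [Finset.sum_congr rfl (fun s hs => ?_), Finset.sum_const, nsmul_eq_mul, mul_comm]
      have hs1 := Finset.ne_of_mem_erase hs
      have hs2 : s ∉ A := by
        have := Finset.mem_of_mem_erase hs
        simp at this; exact this
      rw [hc']; simp only [if_neg hs2, if_neg hs1]
    have hcard : ((Finset.univ.filter (· ∉ A)).erase m).card = n - k - 1 := by
      rw [Finset.card_erase_of_mem hTm]
      have : (Finset.univ.filter (· ∉ A)) = Aᶜ := by ext s; simp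
      rw [this, Finset.card_compl, Fintype.card_fin, hAcard]
      omega
    rw [h1, h2, h3, hcard]
    have hcast : ((n - k - 1 : ℕ) : ℝ) = (n : ℝ) - k - 1 := by
      rw [Nat.cast_sub (by omega), Nat.cast_sub (by omega)]
      push_cast; ring
    rw [hcast, hd', ha']
    push_cast; ring
  obtain ⟨w, hw⟩ := exists_preimage hsym hoff hrow hconn c hc
  -- the linear functional
  set f : (Fin (n+1) → ℝ) →ₗ[ℝ] ℝ :=
    { toFun := fun x => ∑ i, w i * x i
      map_add' := by intro x y; simp [mul_add, Finset.sum_add_distrib]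
      map_smul' := by
        intro r x
        simp only [Pi.smul_apply, smul_eq_mul, RingHom.id_apply, Finset.mul_sum]
        congr 1; ext i; ring } with hf
  have hfrow : ∀ i, f (rowVec n Q i) = c i := by
    intro i
    show ∑ t, w t * (Q i t : ℝ) = c i
    rw [← hw i]
    exact Finset.sum_congr rfl fun t _ => mul_comm _ _
  have huS : ∀ (τ : Equiv.Perm (Fin (n+1))) (j : Fin (n+1)),
      uPerm n Q τ j = ∑ s ∈ (Finset.Iic j).image τ, rowVec n Q s := by
    intro τ j
    rw [uPerm, Finset.sum_image (fun x _ y _ h => τ.injective h)]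
  have hfu : ∀ (τ : Equiv.Perm (Fin (n+1))) (j : Fin (n+1)),
      f (uPerm n Q τ j) = ∑ s ∈ (Finset.Iic j).image τ, c s := by
    intro τ j
    rw [huS, map_sum]
    exact Finset.sum_congr rfl fun s _ => hfrow s
  set M : ℝ := d * (A.card : ℝ) with hM
  have hbound : ∀ (τ : Equiv.Perm (Fin (n+1))) (j : Fin (n+1)), f (uPerm n Q τ j) ≤ M := by
    intro τ j
    rw [hfu]
    exact csum_le A _ m hmA hd ha
  -- the two endpoints
  set P : Fin (n+1) → ℝ := uPerm n Q σ kk with hP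
  set P' : Fin (n+1) → ℝ := uPerm n Q σ kk1 with hP'
  have hIic : Finset.Iic kk1 = insert kk1 (Finset.Iic kk) := by
    ext j
    simp only [Finset.mem_Iic, Finset.mem_insert, Fin.le_def, hkk, hkk1, Fin.ext_iff]
    omega
  have himg1 : (Finset.Iic kk1).image σ = insert m A := by
    rw [hIic, Finset.image_insert, hA, hm]
  have hvec : ∀ (τ : Equiv.Perm (Fin (n+1))) (j : Fin (n+1)),
      ((Finset.Iic j).image τ = A → uPerm n Q τ j = P) ∧
      ((Finset.Iic j).image τ = insert m A → uPerm n Q τ j = P') := by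
    intro τ j
    constructor
    · intro h; rw [huS, h, hP, huS σ kk]
    · intro h; rw [huS, h, hP', huS σ kk1, himg1]
  have hfP : f P = M := by
    rw [hP, hfu, ← hA]
    exact (csum_eq_iff A A m hmA hd ha).mpr (Or.inl rfl)
  have hfP' : f P' = M := by
    rw [hP', hfu, himg1]
    exact (csum_eq_iff A _ m hmA hd ha).mpr (Or.inr rfl)
  have hPmem : P ∈ HDel n Q :=
    Set.mem_iUnion.mpr ⟨σ, subset_convexHull ℝ _ (Set.mem_range_self kk)⟩
  have hub : ∀ y ∈ HDel n Q, f y ≤ M := by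
    intro y hy
    obtain ⟨τ, hyτ⟩ := Set.mem_iUnion.mp hy
    have : convexHull ℝ (Set.range (uPerm n Q τ)) ⊆ {z | f z ≤ M} := by
      apply convexHull_min
      · rintro z ⟨j, rfl⟩; exact hbound τ j
      · exact convex_halfSpace_le f.isLinear M
    exact this hyτ
  refine ⟨f, ?_⟩
  ext x
  constructor
  · rintro ⟨hx, hmaxx⟩
    have hfxge : M ≤ f x := by
      have := hmaxx P hPmem
      rw [hfP] at this; exact this
    obtain ⟨τ, hxτ⟩ := Set.mem_iUnion.mp hx
    have hrange : Set.range (uPerm n Q τ)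
        = ((Finset.univ.image (uPerm n Q τ) : Finset _) : Set _) := by
      rw [Finset.coe_image, Finset.coe_univ, Set.image_univ]
    rw [hrange] at hxτ
    have hle : ∀ y ∈ Finset.univ.image (uPerm n Q τ), f y ≤ M := by
      intro y hy
      obtain ⟨j, _, rfl⟩ := Finset.mem_image.mp hy
      exact hbound τ j
    have hface := face_of_max _ f M hle hxτ hfxge
    have hsub : ((Finset.univ.image (uPerm n Q τ)).filter (fun y => f y = M) : Set _)
        ⊆ ({P, P'} : Set (Fin (n+1) → ℝ)) := by
      intro y hy
      rw [Finset.mem_coe, Finset.mem_filter] at hy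
      obtain ⟨hy1, hy2⟩ := hy
      obtain ⟨j, _, rfl⟩ := Finset.mem_image.mp hy1
      rw [hfu] at hy2
      rcases (csum_eq_iff A _ m hmA hd ha).mp hy2 with h | h
      · exact Or.inl ((hvec τ j).1 h)
      · exact Or.inr ((hvec τ j).2 h)
    have := convexHull_mono hsub hface
    rwa [convexHull_pair] at this
  · intro hx
    have hseg : segment ℝ P P' ⊆ convexHull ℝ (Set.range (uPerm n Q σ)) :=
      segment_subset_convexHull (Set.mem_range_self kk) (Set.mem_range_self kk1)
    have hfx : f x = M := by
      obtain ⟨s, t, hs, ht, hst, rfl⟩ := hx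
      rw [map_add, map_smul, map_smul, hfP, hfP', smul_eq_mul, smul_eq_mul,
        ← add_mul, hst, one_mul]
    refine ⟨Set.mem_iUnion.mpr ⟨σ, hseg hx⟩, ?_⟩
    intro y hy
    rw [hfx]
    exact hub y hy
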